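/- Let (X,f) be a cascade and suppose p ∈ E(X) is a periodic point of the system (E(X), f), i.e., f^n ∘ p = p for some n ≥ 1. Then the (finite) orbit O(p) = {p, f∘p, ..., f^{n-1}∘p} is a minimal left ideal of the semigroup E(X). -/

import Mathlib

/-- The enveloping semigroup of a cascade `(X,f)`: the closure of `{f^k : k ∈ ℤ}`
in `X^X` with the product topology. -/
def envCascade {X : Type*} [TopologicalSpace X] (f : X ≃ₜ X) : Set (X → X) :=
  closure (Set.range fun n : ℤ => ⇑(f.toEquiv ^ n))

/-- `I` is a minimal left ideal of `E(X)` (semigroup under composition). -/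
def IsMinLeftIdealCascade {X : Type*} [TopologicalSpace X] (f : X ≃ₜ X)
    (I : Set (X → X)) : Prop :=
  I.Nonempty ∧ IsClosed I ∧ I ⊆ envCascade f ∧
    (∀ p ∈ envCascade f, ∀ q ∈ I, p ∘ q ∈ I) ∧
    ∀ J : Set (X → X), J.Nonempty → IsClosed J → J ⊆ I →
      (∀ p ∈ envCascade f, ∀ q ∈ J, p ∘ q ∈ J) → J = I

/-- If `p ∈ E(X)` is a periodic point of `(E(X),f)` (i.e. `f^n ∘ p = p` for some `n ≥ 1`),
then its finite orbit `{p, f∘p, …, f^{n-1}∘p}` is a minimal left ideal of `E(X)`. -/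
theorem orbit_of_periodic_is_minimal_left_ideal
    {X : Type*} [MetricSpace X] [CompactSpace X] (f : X ≃ₜ X)
    (p : X → X) (hp : p ∈ envCascade f) (n : ℕ) (hn : 1 ≤ n)
    (hper : (⇑f)^[n] ∘ p = p) :
    IsMinLeftIdealCascade f {g : X → X | ∃ k < n, g = (⇑f)^[k] ∘ p} := by
  set O : Set (X → X) := {g : X → X | ∃ k < n, g = (⇑f)^[k] ∘ p} with hO
  have hcoe : ∀ k : ℕ, ⇑(f.toEquiv ^ (k : ℤ)) = (⇑f)^[k] := by
    intro k
    rw [zpow_natCast, Equiv.Perm.coe_pow]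
    rfl
  have hid : ∀ a : ℤ, ⇑(f.toEquiv ^ (-a)) ∘ ⇑(f.toEquiv ^ a) = id := by
    intro a
    rw [← Equiv.Perm.coe_mul, ← zpow_add]
    simp
  have hnp : ⇑(f.toEquiv ^ (n : ℤ)) ∘ p = p := by rw [hcoe]; exact hper
  -- f^(n*t) ∘ p = p for all t : ℤ
  have hmul : ∀ t : ℤ, ⇑(f.toEquiv ^ ((n : ℤ) * t)) ∘ p = p := by
    intro t
    induction t using Int.induction_on with
    | zero => simp
    | succ t ih =>
        have h1 : (n : ℤ) * (t + 1) = (n : ℤ) + (n : ℤ) * t := by ring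
        rw [h1, zpow_add, Equiv.Perm.coe_mul, Function.comp_assoc, ih, hnp]
    | pred t ih =>
        have h1 : (n : ℤ) * (-t : ℤ) = (n : ℤ) + (n : ℤ) * (-t - 1) := by ring
        have h2 := ih
        rw [h1, zpow_add, Equiv.Perm.coe_mul, Function.comp_assoc] at h2
        have h3 := congrArg (fun g => ⇑(f.toEquiv ^ (-(n : ℤ))) ∘ g) h2
        simp only [← Function.comp_assoc, hid, Function.id_comp] at h3
        rw [h3]
        -- goal: f^(-n) ∘ p = p
        conv_lhs => rw [← hnp]
        rw [← Function.comp_assoc, hid, Function.id_comp]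
  -- every integer power composed with p lands in O
  have hZ : ∀ m : ℤ, ⇑(f.toEquiv ^ m) ∘ p ∈ O := by
    intro m
    have hn0 : (0 : ℤ) < n := by exact_mod_cast hn
    have hr0 : 0 ≤ m % n := Int.emod_nonneg m (by omega)
    have hrn : m % n < n := Int.emod_lt_of_pos m hn0
    have hdecomp : m = m % n + (n : ℤ) * (m / n) := by
      rw [Int.emod_add_mul_ediv]
    refine ⟨(m % n).toNat, ?_, ?_⟩
    · omega
    · rw [← hcoe]
      have : ((m % n).toNat : ℤ) = m % n := Int.toNat_of_nonneg hr0
      rw [this, hdecomp, zpow_add, Equiv.Perm.coe_mul, Function.comp_assoc, hmul]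
      rw [← hdecomp]
  -- O is finite, hence closed
  have hfin : O.Finite := by
    have : O ⊆ (fun k : ℕ => (⇑f)^[k] ∘ p) '' (Set.Iio n) := by
      rintro g ⟨k, hk, rfl⟩
      exact ⟨k, hk, rfl⟩
    exact Set.Finite.subset ((Set.finite_Iio n).image _) this
  have hclosed : IsClosed O := hfin.isClosed
  -- O ⊆ E(X)
  have hsub : O ⊆ envCascade f := by
    rintro g ⟨k, hk, rfl⟩
    have hcont : Continuous fun g : X → X => (⇑f)^[k] ∘ g := by
      refine continuous_pi fun x => ?_
      exact (f.continuous.iterate k).comp (continuous_apply x)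
    have hmaps : Set.MapsTo (fun g : X → X => (⇑f)^[k] ∘ g)
        (Set.range fun m : ℤ => ⇑(f.toEquiv ^ m))
        (Set.range fun m : ℤ => ⇑(f.toEquiv ^ m)) := by
      rintro _ ⟨m, rfl⟩
      refine ⟨(k : ℤ) + m, ?_⟩
      show ⇑(f.toEquiv ^ ((k : ℤ) + m)) = (⇑f)^[k] ∘ ⇑(f.toEquiv ^ m)
      rw [zpow_add, Equiv.Perm.coe_mul, hcoe]
    exact map_mem_closure hcont hp hmaps
  -- left ideal
  have hideal : ∀ q ∈ envCascade f, ∀ g ∈ O, q ∘ g ∈ O := by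
    rintro q hq g ⟨k, hk, rfl⟩
    have hcont : Continuous fun q : X → X => q ∘ ((⇑f)^[k] ∘ p) := by
      refine continuous_pi fun x => ?_
      exact continuous_apply _
    have hsubset : (Set.range fun m : ℤ => ⇑(f.toEquiv ^ m)) ⊆
        (fun q : X → X => q ∘ ((⇑f)^[k] ∘ p)) ⁻¹' O := by
      rintro _ ⟨m, rfl⟩
      show ⇑(f.toEquiv ^ m) ∘ ((⇑f)^[k] ∘ p) ∈ O
      rw [← hcoe, ← Function.comp_assoc, ← Equiv.Perm.coe_mul, ← zpow_add]
      exact hZ _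
    have := closure_minimal hsubset (hclosed.preimage hcont) hq
    exact this
  refine ⟨⟨p, 0, by omega, by simp⟩, hclosed, hsub, hideal, ?_⟩
  rintro J ⟨g, hgJ⟩ hJclosed hJsub hJideal
  obtain ⟨k, hk, rfl⟩ := hJsub hgJ
  refine Set.Subset.antisymm hJsub ?_
  rintro _ ⟨j, hj, rfl⟩
  have hq : ⇑(f.toEquiv ^ ((j : ℤ) - k)) ∈ envCascade f :=
    subset_closure ⟨(j : ℤ) - k, rfl⟩
  have key : ⇑(f.toEquiv ^ ((j : ℤ) - k)) ∘ ((⇑f)^[k] ∘ p) = (⇑f)^[j] ∘ p := by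
    rw [← hcoe k, ← Function.comp_assoc, ← Equiv.Perm.coe_mul, ← zpow_add,
      sub_add_cancel, hcoe]
  have := hJideal _ hq _ hgJ
  rwa [key] at this
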